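/- For the pentagonal linkage l = (1, 1, 1/4, 1/4, 1), the moduli space M(l), realized as the slice S(l) = { P : Fin 5 → ℝ² | P 0 = 0, P 1 = (1, 0), dist (P i) (P (i+1 mod 5)) = l i for all i }, has exactly two connected components, and each connected component (with its subspace topology) is homeomorphic to the 2-torus Circle × Circle. -/

import Mathlib

abbrev pentagonTwoToriModuliSpace : Type :=
  {P : Fin 5 → ℂ // P 0 = 0 ∧ P 1 = 1 ∧
    ∀ i, dist (P i) (P (i + 1)) = ![1, 1, 1/4, 1/4, 1] i}

noncomputable def Complex.abs : AbsoluteValue ℂ ℝ := NormedField.toAbsoluteValue ℂ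

@[simp] lemma Complex.abs_apply (z : ℂ) : Complex.abs z = ‖z‖ := rfl

lemma Complex.norm_eq_abs (z : ℂ) : ‖z‖ = Complex.abs z := rfl

lemma Complex.sq_abs (z : ℂ) : Complex.abs z ^ 2 = Complex.normSq z := by
  rw [Complex.abs_apply, Complex.sq_norm]

lemma Complex.normSq_eq_abs (z : ℂ) : Complex.normSq z = Complex.abs z ^ 2 := by
  rw [Complex.sq_abs]

lemma Circle.abs_coe (z : Circle) : Complex.abs (z : ℂ) = 1 := by
  rw [Complex.abs_apply, Circle.norm_coe]

lemma Complex.continuous_abs : Continuous fun z : ℂ => Complex.abs z := continuous_norm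

open Complex ComplexConjugate

/-! ### Auxiliary complex-number lemmas -/

noncomputable def sq2 (c : ℂ) : ℝ := Real.sqrt (1 - (Complex.abs c)^2/4)
noncomputable def tval (c : ℂ) (ε : Bool) : ℝ := (if ε then (1:ℝ) else -1) * (sq2 c / Complex.abs c)
noncomputable def branch (c : ℂ) (ε : Bool) : ℂ := ((1/2 : ℂ) + (tval c ε : ℝ) * Complex.I) * c

lemma sq2_nonneg (c : ℂ) : 0 ≤ sq2 c := Real.sqrt_nonneg _

lemma sq2_sq {c : ℂ} (h2 : Complex.abs c ≤ 3/2) :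
    sq2 c ^ 2 = 1 - (Complex.abs c)^2/4 := by
  have : (0:ℝ) ≤ 1 - (Complex.abs c)^2/4 := by nlinarith [Complex.abs.nonneg c]
  rw [sq2, Real.sq_sqrt this]

lemma sq2_pos {c : ℂ} (h2 : Complex.abs c ≤ 3/2) : 0 < sq2 c := by
  apply Real.sqrt_pos.2; nlinarith [Complex.abs.nonneg c]

lemma tval_sq {c : ℂ} (ε : Bool) : (tval c ε)^2 = sq2 c^2 / (Complex.abs c)^2 := by
  rw [tval]; cases ε <;> simp [div_pow]

lemma abs_coeff_add (t : ℝ) : Complex.abs ((1/2 : ℂ) + (t : ℝ) * Complex.I) ^ 2 = 1/4 + t^2 := by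
  rw [show ((1/2:ℂ) = ((1/2:ℝ):ℂ)) by norm_num, Complex.sq_abs, Complex.normSq_add_mul_I]
  norm_num

lemma abs_coeff_sub (t : ℝ) : Complex.abs ((1/2 : ℂ) - (t : ℝ) * Complex.I) ^ 2 = 1/4 + t^2 := by
  rw [show ((1/2:ℂ) - (t:ℝ) * Complex.I = ((1/2:ℝ):ℂ) + ((-t : ℝ):ℂ) * Complex.I) by push_cast; ring,
    Complex.sq_abs, Complex.normSq_add_mul_I]
  norm_num

lemma abs_branch {c : ℂ} (h1 : 1/2 ≤ Complex.abs c) (h2 : Complex.abs c ≤ 3/2) (ε : Bool) :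
    Complex.abs (branch c ε) = 1 := by
  have hc0 : (0:ℝ) < Complex.abs c := lt_of_lt_of_le (by norm_num) h1
  have hb : Complex.abs (branch c ε)^2 = 1 := by
    rw [branch, map_mul, mul_pow, abs_coeff_add, tval_sq, sq2_sq h2]
    field_simp
    ring
  nlinarith [Complex.abs.nonneg (branch c ε)]

lemma sub_branch (c : ℂ) (ε : Bool) :
    c - branch c ε = ((1/2 : ℂ) - (tval c ε : ℝ) * Complex.I) * c := by
  rw [branch]; ring

lemma abs_sub_branch {c : ℂ} (h1 : 1/2 ≤ Complex.abs c) (h2 : Complex.abs c ≤ 3/2) (ε : Bool) :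
    Complex.abs (c - branch c ε) = 1 := by
  have hc0 : (0:ℝ) < Complex.abs c := lt_of_lt_of_le (by norm_num) h1
  have hb : Complex.abs (c - branch c ε)^2 = 1 := by
    rw [sub_branch, map_mul, mul_pow, abs_coeff_sub, tval_sq, sq2_sq h2]
    field_simp
    ring
  nlinarith [Complex.abs.nonneg (c - branch c ε)]

lemma im_branch_conj {c : ℂ} (h1 : 1/2 ≤ Complex.abs c) (ε : Bool) :
    ((branch c ε) * conj c).im = (if ε then (1:ℝ) else -1) * (sq2 c * Complex.abs c) := by
  have hc0 : (0:ℝ) < Complex.abs c := lt_of_lt_of_le (by norm_num) h1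
  rw [branch, mul_assoc, Complex.mul_conj]
  have : (((1/2 : ℂ) + (tval c ε : ℝ) * Complex.I) * (Complex.normSq c : ℝ)).im
      = tval c ε * Complex.normSq c := by
    simp [Complex.add_im, Complex.mul_im]
  rw [this, Complex.normSq_eq_abs, tval]
  cases ε <;> field_simp <;> ring

lemma branch_recover {c z : ℂ} (h1 : 1/2 ≤ Complex.abs c) (h2 : Complex.abs c ≤ 3/2)
    (hz : Complex.abs z = 1) (hcz : Complex.abs (c - z) = 1) :
    z = branch c (decide (0 < (z * conj c).im)) ∧ (z * conj c).im ≠ 0 := by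
  have hc0 : (0:ℝ) < Complex.abs c := lt_of_lt_of_le (by norm_num) h1
  have hcne : c ≠ 0 := by
    intro h; rw [h] at hc0; simp at hc0
  have hnz : Complex.normSq z = 1 := by rw [Complex.normSq_eq_abs, hz]; norm_num
  have hncz : Complex.normSq (c - z) = 1 := by rw [Complex.normSq_eq_abs, hcz]; norm_num
  have hnz' : z.re^2 + z.im^2 = 1 := by
    rw [Complex.normSq_apply] at hnz; nlinarith
  have hncz' : (c.re - z.re)^2 + (c.im - z.im)^2 = 1 := by
    rw [Complex.normSq_apply] at hncz; simp at hncz; nlinarith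
  have hre2 : z.re*c.re + z.im*c.im = (c.re^2 + c.im^2)/2 := by nlinarith
  set m := (z * conj c).im with hm
  have hm2 : m = z.im*c.re - z.re*c.im := by
    rw [hm, Complex.mul_im]; simp; ring
  have hnc : Complex.abs c^2 = c.re^2 + c.im^2 := by
    rw [Complex.sq_abs, Complex.normSq_apply]; ring
  have hs : (z - c/2) * conj c = (m : ℝ) * Complex.I := by
    apply Complex.ext
    · simp [Complex.mul_re, Complex.sub_re, Complex.sub_im]; linarith
    · simp [Complex.mul_im, Complex.sub_re, Complex.sub_im, hm2]; ring
  have hsval : z = c/2 + (m : ℝ) * Complex.I * c / ((Complex.normSq c : ℝ) : ℂ) := by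
    have hnsne : ((Complex.normSq c : ℝ) : ℂ) ≠ 0 := by
      simp [Complex.normSq_eq_zero]; exact hcne
    have h5 : (z - c/2) * ((Complex.normSq c : ℝ):ℂ) = (m:ℝ) * Complex.I * c := by
      rw [show (((Complex.normSq c : ℝ)):ℂ) = c * conj c from (Complex.mul_conj c).symm]
      calc (z - c/2) * (c * conj c) = ((z - c/2) * conj c) * c := by ring
        _ = (m:ℝ) * Complex.I * c := by rw [hs]
    rw [← sub_eq_iff_eq_add', eq_div_iff hnsne]
    exact h5
  have hmsq : m^2 = (c.re^2+c.im^2) * (1 - (c.re^2+c.im^2)/4) := by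
    rw [hm2]
    linear_combination (c.re^2+c.im^2) * hnz' - (z.re*c.re + z.im*c.im + (c.re^2+c.im^2)/2) * hre2
  have h14 : (1:ℝ)/4 ≤ c.re^2+c.im^2 := by rw [← hnc]; nlinarith
  have h94 : c.re^2+c.im^2 ≤ 9/4 := by rw [← hnc]; nlinarith
  have hmne : m ≠ 0 := by
    intro h0
    rw [h0] at hmsq
    nlinarith
  refine ⟨?_, hmne⟩
  have hmabs : |m| = Complex.abs c * sq2 c := by
    have hr2 : (Complex.abs c * sq2 c)^2 = m^2 := by
      rw [mul_pow, sq2_sq h2, hnc, hmsq]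
    rw [← Real.sqrt_sq_eq_abs, ← hr2,
      Real.sqrt_sq (mul_nonneg (Complex.abs.nonneg c) (sq2_nonneg c))]
  have hcast : ((Complex.normSq c : ℝ) : ℂ) = ((Complex.abs c : ℝ):ℂ)^2 := by
    rw [← Complex.sq_abs]; push_cast; ring
  have habsne : ((Complex.abs c : ℝ):ℂ) ≠ 0 := by
    simpa using hc0.ne'
  rcases lt_or_gt_of_ne hmne with hneg | hpos
  · have hdec : decide (0 < m) = false := by simp [not_lt.2 hneg.le]
    have hmval : m = -(Complex.abs c * sq2 c) := by
      rw [← hmabs, abs_of_neg hneg]; ring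
    rw [hm] at hdec
    rw [hdec, hsval, hmval, branch, tval]
    simp only [Bool.false_eq_true, if_false]
    rw [hcast]
    push_cast
    field_simp
  · have hdec : decide (0 < m) = true := by simp [hpos]
    have hmval : m = Complex.abs c * sq2 c := by
      rw [← hmabs, abs_of_pos hpos]
    rw [hm] at hdec
    rw [hdec, hsval, hmval, branch, tval]
    simp only [if_true]
    rw [hcast]
    push_cast
    field_simp

lemma c_bounds {a b : ℂ} (ha : Complex.abs a = 1/4) (hb : Complex.abs b = 1/4) :
    1/2 ≤ Complex.abs (-(1 + a + b)) ∧ Complex.abs (-(1 + a + b)) ≤ 3/2 := by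
  rw [Complex.abs.map_neg]
  have hab : Complex.abs (a + b) ≤ 1/2 :=
    le_trans (Complex.abs.add_le a b) (by rw [ha, hb]; norm_num)
  constructor
  · have h1 := Complex.abs.add_le (1+a+b) (-(a+b))
    rw [Complex.abs.map_neg] at h1
    have e : (1+a+b) + (-(a+b)) = 1 := by ring
    rw [e, map_one] at h1
    linarith
  · calc Complex.abs (1 + a + b) ≤ Complex.abs (1 + a) + Complex.abs b := Complex.abs.add_le _ _
      _ ≤ Complex.abs 1 + Complex.abs a + Complex.abs b := by
          have := Complex.abs.add_le 1 a; linarith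
      _ ≤ 3/2 := by rw [map_one, ha, hb]; norm_num

/-! ### The moduli space -/

namespace PTT

abbrev X := pentagonTwoToriModuliSpace
abbrev T := (Circle × Circle) × Bool

lemma habs1 (x : X) : Complex.abs (x.1 2 - 1) = 1 := by
  have h := x.2.2.2 1
  rw [Complex.dist_eq, x.2.2.1] at h
  rw [show ((1:Fin 5)+1) = 2 from rfl] at h
  norm_num at h
  rw [← Complex.abs.map_neg]
  simpa [neg_sub] using h

lemma habs3 (x : X) : Complex.abs (x.1 3 - x.1 2) = 1/4 := by
  have h := x.2.2.2 2
  rw [Complex.dist_eq, show ((2:Fin 5)+1) = 3 from rfl] at h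
  norm_num at h
  rw [← Complex.abs.map_neg]
  simpa [neg_sub] using h

lemma habs4 (x : X) : Complex.abs (x.1 4 - x.1 3) = 1/4 := by
  have h := x.2.2.2 3
  rw [Complex.dist_eq, show ((3:Fin 5)+1) = 4 from rfl] at h
  norm_num at h
  rw [← Complex.abs.map_neg]
  simpa [neg_sub] using h

lemma habs5 (x : X) : Complex.abs (x.1 4) = 1 := by
  have h := x.2.2.2 4
  rw [Complex.dist_eq, show ((4:Fin 5)+1) = 0 from rfl, x.2.1] at h
  norm_num at h
  exact h

/-- `c` for a configuration. -/
noncomputable def cX (x : X) : ℂ := -(1 + (x.1 3 - x.1 2) + (x.1 4 - x.1 3))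

lemma cX_eq (x : X) : cX x = x.1 2 - 1 - x.1 4 := by rw [cX]; ring

lemma cX_bounds (x : X) : 1/2 ≤ Complex.abs (cX x) ∧ Complex.abs (cX x) ≤ 3/2 :=
  c_bounds (habs3 x) (habs4 x)

lemma cX_sub (x : X) : Complex.abs (cX x - (x.1 2 - 1)) = 1 := by
  rw [cX_eq, show x.1 2 - 1 - x.1 4 - (x.1 2 - 1) = -(x.1 4) by ring, Complex.abs.map_neg]
  exact habs5 x

/-- The main structure theorem for configurations: the long-edge vector is one of the
two branches, and the sign discriminant is nonzero. -/
lemma branchX (x : X) :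
    x.1 2 - 1 = branch (cX x)
        (decide (0 < ((x.1 2 - 1) * (starRingEnd ℂ) (cX x)).im)) ∧
      ((x.1 2 - 1) * (starRingEnd ℂ) (cX x)).im ≠ 0 :=
  branch_recover (cX_bounds x).1 (cX_bounds x).2 (habs1 x) (cX_sub x)

/-- Forward map to the disjoint union of two tori. -/
noncomputable def fwd (x : X) : T :=
  ((⟨4*(x.1 3 - x.1 2), mem_sphere_zero_iff_norm.2 (by
      rw [norm_mul, Complex.norm_eq_abs, Complex.norm_eq_abs, habs3 x]
      norm_num)⟩,
    ⟨4*(x.1 4 - x.1 3), mem_sphere_zero_iff_norm.2 (by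
      rw [norm_mul, Complex.norm_eq_abs, Complex.norm_eq_abs, habs4 x]
      norm_num)⟩),
   decide (0 < ((x.1 2 - 1) * (starRingEnd ℂ) (cX x)).im))

noncomputable def cOf (y : T) : ℂ := -(1 + (y.1.1 : ℂ)/4 + (y.1.2 : ℂ)/4)

lemma abs_quarter (u : Circle) : Complex.abs ((u : ℂ)/4) = 1/4 := by
  rw [map_div₀, Circle.abs_coe]; norm_num

lemma cOf_bounds (y : T) : 1/2 ≤ Complex.abs (cOf y) ∧ Complex.abs (cOf y) ≤ 3/2 :=
  c_bounds (abs_quarter y.1.1) (abs_quarter y.1.2)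

noncomputable def zOf (y : T) : ℂ := branch (cOf y) y.2

lemma abs_zOf (y : T) : Complex.abs (zOf y) = 1 :=
  abs_branch (cOf_bounds y).1 (cOf_bounds y).2 y.2

lemma abs_cOf_sub_zOf (y : T) : Complex.abs (cOf y - zOf y) = 1 :=
  abs_sub_branch (cOf_bounds y).1 (cOf_bounds y).2 y.2

noncomputable def bwdP (y : T) : Fin 5 → ℂ :=
  ![0, 1, 1 + zOf y, 1 + zOf y + (y.1.1 : ℂ)/4, 1 + zOf y + (y.1.1 : ℂ)/4 + (y.1.2 : ℂ)/4]

lemma bwdP_mem (y : T) : bwdP y 0 = 0 ∧ bwdP y 1 = 1 ∧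
    ∀ i, dist (bwdP y i) (bwdP y (i + 1)) = ![1, 1, 1/4, 1/4, 1] i := by
  refine ⟨rfl, rfl, ?_⟩
  intro i
  fin_cases i
  · show dist (bwdP y 0) (bwdP y 1) = 1
    rw [Complex.dist_eq]
    show Complex.abs (0 - 1) = 1
    simp
  · show dist (bwdP y 1) (bwdP y 2) = 1
    rw [Complex.dist_eq]
    show Complex.abs (1 - (1 + zOf y)) = 1
    rw [show (1 : ℂ) - (1 + zOf y) = -(zOf y) by ring, Complex.abs.map_neg]
    exact abs_zOf y
  · show dist (bwdP y 2) (bwdP y 3) = 1/4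
    rw [Complex.dist_eq]
    show Complex.abs ((1 + zOf y) - (1 + zOf y + (y.1.1 : ℂ)/4)) = 1/4
    rw [show (1 + zOf y) - (1 + zOf y + (y.1.1 : ℂ)/4) = -((y.1.1:ℂ)/4) by ring,
      Complex.abs.map_neg]
    exact abs_quarter y.1.1
  · show dist (bwdP y 3) (bwdP y 4) = 1/4
    rw [Complex.dist_eq]
    show Complex.abs ((1 + zOf y + (y.1.1 : ℂ)/4) - (1 + zOf y + (y.1.1 : ℂ)/4 + (y.1.2:ℂ)/4)) = 1/4
    rw [show (1 + zOf y + (y.1.1 : ℂ)/4) - (1 + zOf y + (y.1.1 : ℂ)/4 + (y.1.2:ℂ)/4)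
        = -((y.1.2:ℂ)/4) by ring, Complex.abs.map_neg]
    exact abs_quarter y.1.2
  · show dist (bwdP y 4) (bwdP y 0) = 1
    rw [Complex.dist_eq]
    show Complex.abs ((1 + zOf y + (y.1.1 : ℂ)/4 + (y.1.2:ℂ)/4) - 0) = 1
    rw [show (1 + zOf y + (y.1.1 : ℂ)/4 + (y.1.2:ℂ)/4) - 0 = -(cOf y - zOf y) by
      rw [cOf]; ring, Complex.abs.map_neg]
    exact abs_cOf_sub_zOf y

noncomputable def bwd (y : T) : X := ⟨bwdP y, bwdP_mem y⟩

lemma cOf_fwd (x : X) : cOf (fwd x) = cX x := by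
  show -(1 + (4*(x.1 3 - x.1 2))/4 + (4*(x.1 4 - x.1 3))/4) = cX x
  rw [cX]; ring

lemma zOf_fwd (x : X) : zOf (fwd x) = x.1 2 - 1 := by
  rw [zOf, cOf_fwd]
  exact ((branchX x).1).symm

lemma left_inv' (x : X) : bwd (fwd x) = x := by
  apply Subtype.ext
  funext i
  fin_cases i
  · show (0 : ℂ) = x.1 0
    exact x.2.1.symm
  · show (1 : ℂ) = x.1 1
    exact x.2.2.1.symm
  · show 1 + zOf (fwd x) = x.1 2
    rw [zOf_fwd]; ring
  · show 1 + zOf (fwd x) + (4*(x.1 3 - x.1 2))/4 = x.1 3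
    rw [zOf_fwd]; ring
  · show 1 + zOf (fwd x) + (4*(x.1 3 - x.1 2))/4 + (4*(x.1 4 - x.1 3))/4 = x.1 4
    rw [zOf_fwd]; ring

lemma cX_bwd (y : T) : cX (bwd y) = cOf y := by
  show -(1 + ((1 + zOf y + (y.1.1 : ℂ)/4) - (1 + zOf y))
      + ((1 + zOf y + (y.1.1 : ℂ)/4 + (y.1.2 : ℂ)/4) - (1 + zOf y + (y.1.1 : ℂ)/4))) = cOf y
  rw [cOf]; ring

lemma right_inv' (y : T) : fwd (bwd y) = y := by
  have hsign : decide (0 < (((bwd y).1 2 - 1) * (starRingEnd ℂ) (cX (bwd y))).im) = y.2 := by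
    have h2 : (bwd y).1 2 - 1 = zOf y := by
      show (1 + zOf y) - 1 = zOf y; ring
    rw [h2, cX_bwd]
    have him := im_branch_conj (c := cOf y) (cOf_bounds y).1 y.2
    rw [zOf, him]
    have hpos : 0 < sq2 (cOf y) * Complex.abs (cOf y) :=
      mul_pos (sq2_pos (cOf_bounds y).2) (lt_of_lt_of_le (by norm_num) (cOf_bounds y).1)
    rw [Complex.abs_apply] at hpos
    cases y.2 with
    | false => simpa using not_lt.2 (le_of_lt (by nlinarith))
    | true => simpa using by nlinarith
  refine Prod.ext (Prod.ext ?_ ?_) hsign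
  · apply Subtype.ext
    show 4*((bwd y).1 3 - (bwd y).1 2) = (y.1.1 : ℂ)
    show 4*((1 + zOf y + (y.1.1 : ℂ)/4) - (1 + zOf y)) = (y.1.1 : ℂ)
    ring
  · apply Subtype.ext
    show 4*((bwd y).1 4 - (bwd y).1 3) = (y.1.2 : ℂ)
    show 4*((1 + zOf y + (y.1.1 : ℂ)/4 + (y.1.2 : ℂ)/4) - (1 + zOf y + (y.1.1 : ℂ)/4)) = (y.1.2 : ℂ)
    ring

lemma pc (i : Fin 5) : Continuous fun x : X => x.1 i :=
  (continuous_apply i).comp continuous_subtype_val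

lemma cX_cont : Continuous cX := by
  unfold cX
  exact ((continuous_const.add ((pc 3).sub (pc 2))).add ((pc 4).sub (pc 3))).neg

lemma g_cont : Continuous fun x : X => ((x.1 2 - 1) * (starRingEnd ℂ) (cX x)).im :=
  Complex.continuous_im.comp
    (((pc 2).sub continuous_const).mul (Complex.continuous_conj.comp cX_cont))

lemma fwd_cont : Continuous fwd := by
  refine Continuous.prodMk (Continuous.prodMk ?_ ?_) ?_
  · exact Continuous.subtype_mk (continuous_const.mul ((pc 3).sub (pc 2))) _
  · exact Continuous.subtype_mk (continuous_const.mul ((pc 4).sub (pc 3))) _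
  · apply IsLocallyConstant.continuous
    apply IsLocallyConstant.iff_isOpen_fiber.2
    intro b
    cases b
    · have : (fun x : X => decide (0 < ((x.1 2 - 1) * (starRingEnd ℂ) (cX x)).im)) ⁻¹' {false}
          = {x : X | ((x.1 2 - 1) * (starRingEnd ℂ) (cX x)).im < 0} := by
        ext x
        simp only [Set.mem_preimage, Set.mem_singleton_iff, decide_eq_false_iff_not, not_lt,
          Set.mem_setOf_eq]
        exact ⟨fun h => lt_of_le_of_ne h (branchX x).2, le_of_lt⟩
      rw [this]
      exact isOpen_lt g_cont continuous_const
    · have : (fun x : X => decide (0 < ((x.1 2 - 1) * (starRingEnd ℂ) (cX x)).im)) ⁻¹' {true}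
          = {x : X | 0 < ((x.1 2 - 1) * (starRingEnd ℂ) (cX x)).im} := by
        ext x
        simp [decide_eq_true_eq]
      rw [this]
      exact isOpen_lt continuous_const g_cont

lemma q1_cont : Continuous fun y : T => (y.1.1 : ℂ) :=
  continuous_subtype_val.comp (continuous_fst.comp continuous_fst)

lemma q2_cont : Continuous fun y : T => (y.1.2 : ℂ) :=
  continuous_subtype_val.comp (continuous_snd.comp continuous_fst)

lemma cOf_cont : Continuous cOf := by
  unfold cOf
  exact ((continuous_const.add (q1_cont.div_const 4)).add (q2_cont.div_const 4)).neg

lemma abs_cOf_cont : Continuous fun y : T => Complex.abs (cOf y) :=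
  Complex.continuous_abs.comp cOf_cont

lemma zOf_cont : Continuous zOf := by
  have h1 : Continuous fun y : T => (if y.2 then (1:ℝ) else -1) :=
    Continuous.comp (continuous_of_discreteTopology (f := fun b : Bool => if b then (1:ℝ) else -1))
      continuous_snd
  have h2 : Continuous fun y : T => sq2 (cOf y) := by
    unfold sq2
    exact Real.continuous_sqrt.comp
      (continuous_const.sub ((abs_cOf_cont.pow 2).div_const 4))
  have h3 : Continuous fun y : T => tval (cOf y) y.2 := by
    unfold tval
    exact h1.mul (h2.div abs_cOf_cont
      (fun y => ne_of_gt (lt_of_lt_of_le (by norm_num) (cOf_bounds y).1)))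
  unfold zOf branch
  exact (continuous_const.add ((Complex.continuous_ofReal.comp h3).mul continuous_const)).mul
    cOf_cont

lemma bwd_cont : Continuous bwd := by
  apply Continuous.subtype_mk
  apply continuous_pi
  intro i
  fin_cases i
  · exact continuous_const
  · exact continuous_const
  · show Continuous fun y : T => 1 + zOf y
    exact continuous_const.add zOf_cont
  · show Continuous fun y : T => 1 + zOf y + (y.1.1 : ℂ)/4
    exact (continuous_const.add zOf_cont).add (q1_cont.div_const 4)
  · show Continuous fun y : T => 1 + zOf y + (y.1.1 : ℂ)/4 + (y.1.2 : ℂ)/4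
    exact ((continuous_const.add zOf_cont).add (q1_cont.div_const 4)).add (q2_cont.div_const 4)

/-- The moduli space is homeomorphic to two disjoint tori. -/
noncomputable def E : X ≃ₜ T where
  toFun := fwd
  invFun := bwd
  left_inv := left_inv'
  right_inv := right_inv'
  continuous_toFun := fwd_cont
  continuous_invFun := bwd_cont

instance : ConnectedSpace Circle :=
  Function.Surjective.connectedSpace
    (fun z => ⟨Complex.arg z, Circle.exp_arg z⟩) Circle.exp.continuous

/-- The component of `x` is the preimage of the torus labelled by the sign of `x`. -/
lemma componentEq (x : X) :
    connectedComponent x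
      = E ⁻¹' ((Set.univ : Set (Circle × Circle)) ×ˢ ({(E x).2} : Set Bool)) := by
  apply subset_antisymm
  · intro y hy
    have hb : (E y).2 = (E x).2 :=
      isPreconnected_connectedComponent.constant
        ((continuous_snd.comp E.continuous).continuousOn) hy mem_connectedComponent
    simp only [Set.mem_preimage, Set.mem_prod, Set.mem_univ, Set.mem_singleton_iff, true_and]
    exact hb
  · apply IsPreconnected.subset_connectedComponent
    · apply IsConnected.isPreconnected
      rw [E.isConnected_preimage]
      exact IsConnected.prod isConnected_univ (isConnected_singleton)
    · simp

lemma snd_eq_iff (a b : X) :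
    connectedComponent a = connectedComponent b ↔ (E a).2 = (E b).2 := by
  constructor
  · intro h
    have hb : b ∈ connectedComponent a := h ▸ mem_connectedComponent
    rw [componentEq a] at hb
    exact hb.2.symm
  · intro h
    rw [componentEq a, componentEq b, h]

/-- The connected components are classified by the sign bit. -/
noncomputable def componentsEquiv : ConnectedComponents X ≃ Fin 2 where
  toFun := Quotient.lift (fun x : X => if (E x).2 then (0 : Fin 2) else 1)
    (by
      intro a b hab
      have h : (E a).2 = (E b).2 := (snd_eq_iff a b).1 hab
      simp [h])
  invFun := fun i => ConnectedComponents.mk (E.symm ((1, 1), if i = 0 then true else false))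
  left_inv := by
    refine Quotient.ind ?_
    intro x
    show ConnectedComponents.mk (E.symm ((1,1),
      if (if (E x).2 then (0:Fin 2) else 1) = 0 then true else false)) = ConnectedComponents.mk x
    have hb : (if (if (E x).2 then (0:Fin 2) else 1) = 0 then true else false) = (E x).2 := by
      cases h : (E x).2 <;> simp
    rw [hb]
    rw [ConnectedComponents.coe_eq_coe]
    rw [componentEq x, componentEq (E.symm ((1,1), (E x).2))]
    rw [E.apply_symm_apply]
  right_inv := by
    intro i
    show (Quotient.lift (fun x : X => if (E x).2 then (0 : Fin 2) else 1) _)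
      (ConnectedComponents.mk (E.symm ((1, 1), if i = 0 then true else false))) = i
    have : (E (E.symm ((1, 1), if i = 0 then true else false))).2
        = (if i = 0 then true else false) := by rw [E.apply_symm_apply]
    show (if (E (E.symm ((1, 1), if i = 0 then true else false))).2 then (0:Fin 2) else 1) = i
    rw [this]
    fin_cases i <;> simp

/-- Each connected component is homeomorphic to the 2-torus. -/
noncomputable def componentHomeo (x : X) :
    (connectedComponent x : Set X) ≃ₜ (Circle × Circle) := by
  rw [componentEq x]
  exact
  { toFun := fun p => (E p.1).1
    invFun := fun q => ⟨E.symm (q, (E x).2), by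
      simp only [Set.mem_preimage, E.apply_symm_apply]
      exact ⟨Set.mem_univ _, rfl⟩⟩
    left_inv := by
      rintro ⟨p, hp⟩
      have h2 : (E p).2 = (E x).2 := hp.2
      apply Subtype.ext
      show E.symm ((E p).1, (E x).2) = p
      rw [← h2]
      exact E.symm_apply_apply p
    right_inv := by
      intro q
      show (E (E.symm (q, (E x).2))).1 = q
      rw [E.apply_symm_apply]
    continuous_toFun :=
      continuous_fst.comp (E.continuous.comp continuous_subtype_val)
    continuous_invFun := by
      apply Continuous.subtype_mk
      exact E.symm.continuous.comp (continuous_id.prodMk continuous_const) }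

end PTT

/-- For the pentagonal linkage `l = (1, 1, 1/4, 1/4, 1)`, the moduli
space `M(l)` (realized as the slice above) has exactly two connected components, and each
connected component, with its subspace topology, is homeomorphic to the 2-torus
`Circle × Circle`. -/
theorem pentagon_two_tori_moduli_space :
    Nonempty (ConnectedComponents pentagonTwoToriModuliSpace ≃ Fin 2) ∧
    ∀ x : pentagonTwoToriModuliSpace,
      Nonempty ((connectedComponent x : Set pentagonTwoToriModuliSpace) ≃ₜ
        (Circle × Circle)) := by
  exact ⟨⟨PTT.componentsEquiv⟩, fun x => ⟨PTT.componentHomeo x⟩⟩
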